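/- Let k be a field with char(k) = 0 or char(k) > min(u,v), where u, v are positive integers. Then the image of ι^2_{u,v}: Sym^{u-2}U ⊗ Sym^{v-2}U → Sym^u U ⊗ Sym^v U (where ι_{u,v}(f⊗g) = f⊗xg − xf⊗g) contains no nonzero tensor of rank at most two. -/

import Mathlib

open Polynomial
open scoped TensorProduct

/-- The map `ι : f ⊗ g ↦ f ⊗ xg - xf ⊗ g` on `k[x] ⊗ k[x]` (the maps `ι_{u,v}` of the paper,
in the polynomial model `Sym^n U` = polynomials of degree `≤ n`). -/
noncomputable def iotaMap (k : Type) [Field k] :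
    Module.End k (Polynomial k ⊗[k] Polynomial k) :=
  LinearMap.lTensor (Polynomial k) (LinearMap.mulLeft k (X : k[X])) -
    LinearMap.rTensor (Polynomial k) (LinearMap.mulLeft k (X : k[X]))

/-- `Sym^a U ⊗ Sym^b U` inside `k[x] ⊗ k[x]` (with `a b : WithBot ℕ`, so that `⊥` gives the
zero space, corresponding to `Sym` of negative index). -/
noncomputable def symTensor (k : Type) [Field k] (a b : WithBot ℕ) :
    Submodule k (Polynomial k ⊗[k] Polynomial k) :=
  LinearMap.range (TensorProduct.map (degreeLE k a).subtype (degreeLE k b).subtype)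

variable {k : Type} [Field k]

lemma iotaMap_tmul (f g : k[X]) :
    iotaMap k (f ⊗ₜ[k] g) = f ⊗ₜ[k] (X * g) - (X * f) ⊗ₜ[k] g := by
  simp [iotaMap]

lemma comp1 : (LinearMap.mul' k (k[X])) ∘ₗ ((iotaMap k ^ 2 : Module.End k _) : _ →ₗ[k] _) = 0 := by
  apply TensorProduct.ext'
  intro f g
  simp only [LinearMap.comp_apply, pow_two, Module.End.mul_apply, iotaMap_tmul, map_sub,
    iotaMap_tmul, LinearMap.mul'_apply, LinearMap.zero_apply]
  ring

lemma comp2 : (LinearMap.mul' k (k[X])) ∘ₗ (LinearMap.lTensor (k[X]) (derivative : k[X] →ₗ[k] k[X])) ∘ₗ ((iotaMap k ^ 2 : Module.End k _) : _ →ₗ[k] _) = 0 := by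
  apply TensorProduct.ext'
  intro f g
  simp only [LinearMap.comp_apply, pow_two, Module.End.mul_apply, iotaMap_tmul, map_sub,
    LinearMap.lTensor_tmul, derivative_mul, derivative_X, LinearMap.mul'_apply,
    LinearMap.zero_apply]
  ring

lemma comp3 : (LinearMap.mul' k (k[X])) ∘ₗ (LinearMap.rTensor (k[X]) (derivative : k[X] →ₗ[k] k[X])) ∘ₗ ((iotaMap k ^ 2 : Module.End k _) : _ →ₗ[k] _) = 0 := by
  apply TensorProduct.ext'
  intro f g
  simp only [LinearMap.comp_apply, pow_two, Module.End.mul_apply, iotaMap_tmul, map_sub,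
    LinearMap.rTensor_tmul, derivative_mul, derivative_X, LinearMap.mul'_apply,
    LinearMap.zero_apply]
  ring

lemma tmul_mem_symTensor {a b : WithBot ℕ} {f g : k[X]}
    (hf : f ∈ degreeLE k a) (hg : g ∈ degreeLE k b) : f ⊗ₜ[k] g ∈ symTensor k a b :=
  ⟨(⟨f, hf⟩ : degreeLE k a) ⊗ₜ[k] (⟨g, hg⟩ : degreeLE k b), rfl⟩

lemma symTensor_bot_left (b : WithBot ℕ) : symTensor k ⊥ b = ⊥ := by
  rw [eq_bot_iff]
  rintro x ⟨z, rfl⟩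
  induction z using TensorProduct.induction_on with
  | zero => simp
  | tmul p q =>
      have hp : (p : k[X]) = 0 := by
        have := mem_degreeLE.mp p.2
        simpa [Polynomial.degree_eq_bot] using this
      simp [hp]
  | add x y hx hy => rw [map_add]; exact add_mem hx hy

lemma symTensor_bot_right (a : WithBot ℕ) : symTensor k a ⊥ = ⊥ := by
  rw [eq_bot_iff]
  rintro x ⟨z, rfl⟩
  induction z using TensorProduct.induction_on with
  | zero => simp
  | tmul p q =>
      have hq : (q : k[X]) = 0 := by
        have := mem_degreeLE.mp q.2
        simpa [Polynomial.degree_eq_bot] using this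
      simp [hq]
  | add x y hx hy => rw [map_add]; exact add_mem hx hy

lemma iotaMap_mem {a b : ℕ} {S : k[X] ⊗[k] k[X]} (hS : S ∈ symTensor k (a : ℕ) (b : ℕ)) :
    iotaMap k S ∈ symTensor k ((a + 1 : ℕ) : WithBot ℕ) ((b + 1 : ℕ) : WithBot ℕ) := by
  obtain ⟨z, rfl⟩ := hS
  induction z using TensorProduct.induction_on with
  | zero => simp
  | tmul p q =>
      have hp : (p : k[X]) ∈ degreeLE k ((a + 1 : ℕ) : WithBot ℕ) := by
        rw [mem_degreeLE]
        refine le_trans (mem_degreeLE.mp p.2) ?_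
        exact_mod_cast WithBot.coe_le_coe.mpr (Nat.le_succ a)
      have hq : (q : k[X]) ∈ degreeLE k ((b + 1 : ℕ) : WithBot ℕ) := by
        rw [mem_degreeLE]
        refine le_trans (mem_degreeLE.mp q.2) ?_
        exact_mod_cast WithBot.coe_le_coe.mpr (Nat.le_succ b)
      have hXp : X * (p : k[X]) ∈ degreeLE k ((a + 1 : ℕ) : WithBot ℕ) := by
        rw [mem_degreeLE]
        refine le_trans (degree_mul_le _ _) ?_
        have := mem_degreeLE.mp p.2
        calc degree (X : k[X]) + degree (p : k[X]) ≤ 1 + (a : WithBot ℕ) := by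
              gcongr
              · exact degree_X_le
        _ = ((a + 1 : ℕ) : WithBot ℕ) := by push_cast; ring
      have hXq : X * (q : k[X]) ∈ degreeLE k ((b + 1 : ℕ) : WithBot ℕ) := by
        rw [mem_degreeLE]
        refine le_trans (degree_mul_le _ _) ?_
        have := mem_degreeLE.mp q.2
        calc degree (X : k[X]) + degree (q : k[X]) ≤ 1 + (b : WithBot ℕ) := by
              gcongr
              · exact degree_X_le
        _ = ((b + 1 : ℕ) : WithBot ℕ) := by push_cast; ring
      rw [TensorProduct.map_tmul, iotaMap_tmul]
      exact sub_mem (tmul_mem_symTensor hp hXq) (tmul_mem_symTensor hXp hq)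
  | add x y hx hy => rw [map_add, map_add]; exact add_mem hx hy

lemma symTensor_proj_left {a b : WithBot ℕ} (φ : k[X] →ₗ[k] k) {T : k[X] ⊗[k] k[X]}
    (hT : T ∈ symTensor k a b) :
    (TensorProduct.lid k (k[X])) ((TensorProduct.map φ LinearMap.id) T) ∈ degreeLE k b := by
  obtain ⟨z, rfl⟩ := hT
  induction z using TensorProduct.induction_on with
  | zero => simp
  | tmul p q =>
      simp only [TensorProduct.map_tmul, TensorProduct.lid_tmul, LinearMap.id_coe, id_eq,
        Submodule.coe_subtype]
      exact Submodule.smul_mem _ _ q.2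
  | add x y hx hy => rw [map_add, map_add, map_add]; exact add_mem hx hy

lemma symTensor_proj_right {a b : WithBot ℕ} (φ : k[X] →ₗ[k] k) {T : k[X] ⊗[k] k[X]}
    (hT : T ∈ symTensor k a b) :
    (TensorProduct.rid k (k[X])) ((TensorProduct.map LinearMap.id φ) T) ∈ degreeLE k a := by
  obtain ⟨z, rfl⟩ := hT
  induction z using TensorProduct.induction_on with
  | zero => simp
  | tmul p q =>
      simp only [TensorProduct.map_tmul, TensorProduct.rid_tmul, LinearMap.id_coe, id_eq,
        Submodule.coe_subtype]
      exact Submodule.smul_mem _ _ p.2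
  | add x y hx hy => rw [map_add, map_add, map_add]; exact add_mem hx hy

lemma exists_dual_pair {V : Type*} [AddCommGroup V] [Module k V] {a b : V}
    (h : LinearIndependent k ![a, b]) : ∃ φ : V →ₗ[k] k, φ a = 1 ∧ φ b = 0 := by
  classical
  have hr : LinearIndepOn k id (Set.range ![a, b]) := h.linearIndepOn_id
  let B := Module.Basis.extend hr
  have hab : a ≠ b := by
    intro hab
    have := h.injective (by simp [hab] : ![a, b] 0 = ![a, b] 1)
    simp at this
  have haS : a ∈ hr.extend (Set.subset_univ _) :=
    hr.subset_extend _ ⟨0, by simp⟩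
  have hbS : b ∈ hr.extend (Set.subset_univ _) :=
    hr.subset_extend _ ⟨1, by simp⟩
  refine ⟨B.coord ⟨a, haS⟩, ?_, ?_⟩
  · have h1 : (B.coord ⟨a, haS⟩) a = (B.coord ⟨a, haS⟩) (B ⟨a, haS⟩) := by
      rw [Module.Basis.extend_apply_self]
    rw [h1, Module.Basis.coord_apply, Module.Basis.repr_self, Finsupp.single_eq_same]
  · have h1 : (B.coord ⟨a, haS⟩) b = (B.coord ⟨a, haS⟩) (B ⟨b, hbS⟩) := by
      rw [Module.Basis.extend_apply_self]
    rw [h1, Module.Basis.coord_apply, Module.Basis.repr_self]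
    exact Finsupp.single_eq_of_ne (by simpa using hab)

lemma li_pair_swap {V : Type*} [AddCommGroup V] [Module k V] {a b : V}
    (h : LinearIndependent k ![a, b]) : LinearIndependent k ![b, a] := by
  rw [LinearIndependent.pair_iff] at h ⊢
  intro s t hst
  obtain ⟨h1, h2⟩ := h t s (by rwa [add_comm])
  exact ⟨h2, h1⟩

lemma not_li_of_C_mul {x y : k[X]} (c : k) (h : y = C c * x)
    (hli : LinearIndependent k ![x, y]) : False := by
  have := (LinearIndependent.pair_iff.mp hli c (-1)
    (by rw [h, Polynomial.smul_eq_C_mul]; ring_nf; simp)).2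
  norm_num at this

lemma natDeg_zero_of_deriv_zero (p : ℕ) [CharP k p] (f : k[X])
    (hf : derivative f = 0) (hp : p = 0 ∨ f.natDegree < p) : f.natDegree = 0 := by
  by_contra h
  have h1 : f.natDegree - 1 + 1 = f.natDegree := Nat.succ_pred_eq_of_pos (Nat.pos_of_ne_zero h)
  have h2 : (derivative f).coeff (f.natDegree - 1) = 0 := by rw [hf]; simp
  rw [coeff_derivative, h1] at h2
  have hf0 : f ≠ 0 := fun h0 => h (by simp [h0])
  have hlc : f.coeff f.natDegree ≠ 0 := Polynomial.leadingCoeff_ne_zero.mpr hf0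
  have h3 : ((f.natDegree - 1 : ℕ) + 1 : k) = 0 := by
    rcases mul_eq_zero.mp h2 with h' | h'
    · exact absurd h' hlc
    · exact h'
  have h4 : ((f.natDegree : ℕ) : k) = 0 := by
    rw [← h1]; push_cast; exact_mod_cast h3
  have h5 : p ∣ f.natDegree := (CharP.cast_eq_zero_iff k p _).mp h4
  rcases hp with rfl | hlt
  · exact h (zero_dvd_iff.mp h5)
  · exact absurd (Nat.le_of_dvd (Nat.pos_of_ne_zero h) h5) (not_le.mpr hlt)

lemma dep_of_wronskian (p : ℕ) [CharP k p] (f g : k[X]) (hf : f ≠ 0) (hg : g ≠ 0)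
    (hW : derivative f * g = f * derivative g)
    (hpf : p = 0 ∨ f.natDegree < p) (hpg : p = 0 ∨ g.natDegree < p) :
    ∃ c : k, g = C c * f := by
  classical
  set d := GCDMonoid.gcd f g with hdd
  have hd : d ≠ 0 := gcd_ne_zero_of_left hf
  set c₁ := f / d with hc₁d
  set c₂ := g / d with hc₂d
  have hf' : f = d * c₁ := (EuclideanDomain.mul_div_cancel' hd (gcd_dvd_left f g)).symm
  have hg' : g = d * c₂ := (EuclideanDomain.mul_div_cancel' hd (gcd_dvd_right f g)).symm
  have hcop : IsCoprime c₁ c₂ := isCoprime_div_gcd_div_gcd hg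
  have hc₁ : c₁ ≠ 0 := left_div_gcd_ne_zero hf
  have hc₂ : c₂ ≠ 0 := right_div_gcd_ne_zero hg
  rw [hf', hg'] at hW
  rw [derivative_mul, derivative_mul] at hW
  have key : derivative c₁ * c₂ = c₁ * derivative c₂ :=
    mul_left_cancel₀ (mul_ne_zero hd hd) (by ring_nf; ring_nf at hW; linear_combination hW)
  have hdvd2 : c₂ ∣ derivative c₂ :=
    (hcop.symm).dvd_of_dvd_mul_left ⟨derivative c₁, by linear_combination -key⟩
  have hdvd1 : c₁ ∣ derivative c₁ :=
    hcop.dvd_of_dvd_mul_left ⟨derivative c₂, by linear_combination key⟩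
  have hder : ∀ c : k[X], c ∣ f ∨ c ∣ g → c ∣ derivative c → c ≠ 0 → c.natDegree = 0 := by
    intro c hcd hdvd hc
    by_cases hD : derivative c = 0
    · refine natDeg_zero_of_deriv_zero p c hD ?_
      rcases hcd with h | h
      · rcases hpf with h0 | h0
        · exact Or.inl h0
        · exact Or.inr (lt_of_le_of_lt (natDegree_le_of_dvd h hf) h0)
      · rcases hpg with h0 | h0
        · exact Or.inl h0
        · exact Or.inr (lt_of_le_of_lt (natDegree_le_of_dvd h hg) h0)
    · by_contra hnd
      exact absurd (natDegree_le_of_dvd hdvd hD)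
        (not_le.mpr (natDegree_derivative_lt hnd))
  have h1 : c₁.natDegree = 0 := hder c₁ (Or.inl ⟨d, by rw [hf']; ring⟩) hdvd1 hc₁
  have h2 : c₂.natDegree = 0 := hder c₂ (Or.inr ⟨d, by rw [hg']; ring⟩) hdvd2 hc₂
  obtain ⟨γ₁, hγ₁⟩ := natDegree_eq_zero.mp h1
  obtain ⟨γ₂, hγ₂⟩ := natDegree_eq_zero.mp h2
  have hγ₁0 : γ₁ ≠ 0 := fun h0 => hc₁ (by rw [← hγ₁, h0, map_zero])
  refine ⟨γ₂ / γ₁, ?_⟩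
  rw [hg', hf', ← hγ₁, ← hγ₂, mul_left_comm, ← C_mul, div_mul_cancel₀ _ hγ₁0]


/-!
STATEMENT 4: if `char k = 0` or `char k > min(u,v)` (`u, v` positive), then the image of
`ι²_{u,v} : Sym^{u-2}U ⊗ Sym^{v-2}U → Sym^u U ⊗ Sym^v U` contains no nonzero tensor of rank
at most two.  (Here `Sym^{u-2}U` is the zero space when `u < 2`.)
-/
set_option maxHeartbeats 2000000 in
theorem stmt4 (k : Type) [Field k] (p : ℕ) [CharP k p]
    (u v : ℕ) (hu : 0 < u) (hv : 0 < v) (hp : p = 0 ∨ min u v < p) :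
    ∀ T ∈ Submodule.map (iotaMap k ^ 2 : Module.End k (Polynomial k ⊗[k] Polynomial k))
        (symTensor k (if u < 2 then (⊥ : WithBot ℕ) else ((u - 2 : ℕ) : WithBot ℕ)) (if v < 2 then (⊥ : WithBot ℕ) else ((v - 2 : ℕ) : WithBot ℕ))),
      (∃ a₁ b₁ a₂ b₂ : k[X], T = a₁ ⊗ₜ[k] b₁ + a₂ ⊗ₜ[k] b₂) → T = 0 := by
  intro T hT hrk
  obtain ⟨S, hS, rfl⟩ := hT
  by_cases hu2 : u < 2
  · rw [if_pos hu2, symTensor_bot_left] at hS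
    have hS0 : S = 0 := by simpa using hS
    rw [hS0]; simp
  by_cases hv2 : v < 2
  · rw [if_neg hu2, if_pos hv2, symTensor_bot_right] at hS
    have hS0 : S = 0 := by simpa using hS
    rw [hS0]; simp
  rw [if_neg hu2, if_neg hv2] at hS
  obtain ⟨a₁, b₁, a₂, b₂, hdec⟩ := hrk
  by_contra hT0
  -- the three evaluation identities
  have h0 : LinearMap.mul' k (k[X]) ((iotaMap k ^ 2) S) = 0 := by
    have := DFunLike.congr_fun (comp1 (k := k)) S
    simpa using this
  have h0b : LinearMap.mul' k (k[X])
      ((LinearMap.lTensor (k[X]) (derivative : k[X] →ₗ[k] k[X])) ((iotaMap k ^ 2) S)) = 0 := by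
    have := DFunLike.congr_fun (comp2 (k := k)) S
    simpa using this
  have h0c : LinearMap.mul' k (k[X])
      ((LinearMap.rTensor (k[X]) (derivative : k[X] →ₗ[k] k[X])) ((iotaMap k ^ 2) S)) = 0 := by
    have := DFunLike.congr_fun (comp3 (k := k)) S
    simpa using this
  have e1 : a₁ * b₁ + a₂ * b₂ = 0 := by
    rw [hdec] at h0; simpa using h0
  have e2 : a₁ * derivative b₁ + a₂ * derivative b₂ = 0 := by
    rw [hdec] at h0b; simpa using h0b
  have e3 : derivative a₁ * b₁ + derivative a₂ * b₂ = 0 := by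
    rw [hdec] at h0c; simpa using h0c
  -- no pure-tensor representation
  have hpure : ∀ x y : k[X], (iotaMap k ^ 2) S ≠ x ⊗ₜ[k] y := by
    intro x y hxy
    have hx : x * y = 0 := by
      have h0' : LinearMap.mul' k (k[X]) ((iotaMap k ^ 2) S) = 0 := by
        have := DFunLike.congr_fun (comp1 (k := k)) S
        simpa using this
      rw [hxy] at h0'; simpa using h0'
    rcases mul_eq_zero.mp hx with h | h
    · exact hT0 (by rw [hxy, h, TensorProduct.zero_tmul])
    · exact hT0 (by rw [hxy, h, TensorProduct.tmul_zero])
  -- independence of the b's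
  have hbli : LinearIndependent k ![b₁, b₂] := by
    by_contra hdep
    rw [LinearIndependent.pair_iff] at hdep
    push_neg at hdep
    obtain ⟨s, t, hst, hne⟩ := hdep
    by_cases ht : t = 0
    · have hs : s ≠ 0 := fun h => hne h ht
      have hb1 : b₁ = 0 := by
        have : s • b₁ = 0 := by rw [ht, zero_smul, add_zero] at hst; exact hst
        exact (smul_eq_zero.mp this).resolve_left hs
      exact hpure a₂ b₂ (by rw [hdec, hb1, TensorProduct.tmul_zero, zero_add])
    · have h3 : (t⁻¹ * s) • b₁ + b₂ = 0 := by
        have h3 : t⁻¹ • (s • b₁ + t • b₂) = 0 := by rw [hst, smul_zero]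
        rwa [smul_add, smul_smul, smul_smul, inv_mul_cancel₀ ht, one_smul] at h3
      have h4 : b₂ = -((t⁻¹ * s) • b₁) := eq_neg_of_add_eq_zero_right h3
      refine hpure (a₁ + (-(t⁻¹ * s)) • a₂) b₁ ?_
      rw [hdec, h4, TensorProduct.add_tmul, TensorProduct.smul_tmul, neg_smul]
  -- independence of the a's
  have hali : LinearIndependent k ![a₁, a₂] := by
    by_contra hdep
    rw [LinearIndependent.pair_iff] at hdep
    push_neg at hdep
    obtain ⟨s, t, hst, hne⟩ := hdep
    by_cases ht : t = 0
    · have hs : s ≠ 0 := fun h => hne h ht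
      have ha1 : a₁ = 0 := by
        have : s • a₁ = 0 := by rw [ht, zero_smul, add_zero] at hst; exact hst
        exact (smul_eq_zero.mp this).resolve_left hs
      exact hpure a₂ b₂ (by rw [hdec, ha1, TensorProduct.zero_tmul, zero_add])
    · have h3 : (t⁻¹ * s) • a₁ + a₂ = 0 := by
        have h3 : t⁻¹ • (s • a₁ + t • a₂) = 0 := by rw [hst, smul_zero]
        rwa [smul_add, smul_smul, smul_smul, inv_mul_cancel₀ ht, one_smul] at h3
      have h4 : a₂ = -((t⁻¹ * s) • a₁) := eq_neg_of_add_eq_zero_right h3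
      refine hpure a₁ (b₁ + (-(t⁻¹ * s)) • b₂) ?_
      rw [hdec, h4, TensorProduct.tmul_add, ← TensorProduct.smul_tmul, neg_smul]
  -- nonvanishing
  have hb1 : b₁ ≠ 0 := by have := hbli.ne_zero 0; simpa using this
  have hb2 : b₂ ≠ 0 := by have := hbli.ne_zero 1; simpa using this
  have ha1 : a₁ ≠ 0 := by have := hali.ne_zero 0; simpa using this
  have ha2 : a₂ ≠ 0 := by have := hali.ne_zero 1; simpa using this
  -- Wronskians vanish
  have Wb : derivative b₁ * b₂ = b₁ * derivative b₂ := by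
    have h4 : a₁ * (derivative b₁ * b₂ - b₁ * derivative b₂) = 0 := by
      linear_combination b₂ * e2 - derivative b₂ * e1
    rcases mul_eq_zero.mp h4 with h | h
    · exact absurd h ha1
    · exact sub_eq_zero.mp h
  have Wa : derivative a₁ * a₂ = a₁ * derivative a₂ := by
    have h4 : b₁ * (derivative a₁ * a₂ - a₁ * derivative a₂) = 0 := by
      linear_combination a₂ * e3 - derivative a₂ * e1
    rcases mul_eq_zero.mp h4 with h | h
    · exact absurd h hb1
    · exact sub_eq_zero.mp h
  -- degree bounds
  have hTm : (iotaMap k ^ 2) S ∈ symTensor k (u : ℕ) (v : ℕ) := by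
    have h1 := iotaMap_mem hS
    have h2 := iotaMap_mem h1
    have hu' : (u - 2 + 1 + 1 : ℕ) = u := by omega
    have hv' : (v - 2 + 1 + 1 : ℕ) = v := by omega
    rw [hu', hv'] at h2
    simpa [pow_two, Module.End.mul_apply] using h2
  obtain ⟨φ₁, hφ11, hφ12⟩ := exists_dual_pair hali
  obtain ⟨φ₂, hφ22, hφ21⟩ := exists_dual_pair (li_pair_swap hali)
  obtain ⟨ψ₁, hψ11, hψ12⟩ := exists_dual_pair hbli
  obtain ⟨ψ₂, hψ22, hψ21⟩ := exists_dual_pair (li_pair_swap hbli)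
  have hb1d : b₁.natDegree ≤ v := by
    have h5 := symTensor_proj_left φ₁ hTm
    rw [hdec] at h5
    simp only [map_add, TensorProduct.map_tmul, TensorProduct.lid_tmul, LinearMap.id_coe, id_eq,
      hφ11, hφ12, one_smul, zero_smul, add_zero] at h5
    exact natDegree_le_iff_degree_le.mpr (mem_degreeLE.mp h5)
  have hb2d : b₂.natDegree ≤ v := by
    have h5 := symTensor_proj_left φ₂ hTm
    rw [hdec] at h5
    simp only [map_add, TensorProduct.map_tmul, TensorProduct.lid_tmul, LinearMap.id_coe, id_eq,
      hφ22, hφ21, one_smul, zero_smul, zero_add] at h5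
    exact natDegree_le_iff_degree_le.mpr (mem_degreeLE.mp h5)
  have ha1d : a₁.natDegree ≤ u := by
    have h5 := symTensor_proj_right ψ₁ hTm
    rw [hdec] at h5
    simp only [map_add, TensorProduct.map_tmul, TensorProduct.rid_tmul, LinearMap.id_coe, id_eq,
      hψ11, hψ12, one_smul, zero_smul, add_zero] at h5
    exact natDegree_le_iff_degree_le.mpr (mem_degreeLE.mp h5)
  have ha2d : a₂.natDegree ≤ u := by
    have h5 := symTensor_proj_right ψ₂ hTm
    rw [hdec] at h5
    simp only [map_add, TensorProduct.map_tmul, TensorProduct.rid_tmul, LinearMap.id_coe, id_eq,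
      hψ22, hψ21, one_smul, zero_smul, zero_add] at h5
    exact natDegree_le_iff_degree_le.mpr (mem_degreeLE.mp h5)
  -- conclude
  rcases hp with hp0 | hmin
  · obtain ⟨c, hc⟩ := dep_of_wronskian p b₁ b₂ hb1 hb2 Wb (Or.inl hp0) (Or.inl hp0)
    exact not_li_of_C_mul c hc hbli
  · rcases min_lt_iff.mp hmin with hup | hvp
    · obtain ⟨c, hc⟩ := dep_of_wronskian p a₁ a₂ ha1 ha2 Wa
        (Or.inr (lt_of_le_of_lt ha1d hup)) (Or.inr (lt_of_le_of_lt ha2d hup))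
      exact not_li_of_C_mul c hc hali
    · obtain ⟨c, hc⟩ := dep_of_wronskian p b₁ b₂ hb1 hb2 Wb
        (Or.inr (lt_of_le_of_lt hb1d hvp)) (Or.inr (lt_of_le_of_lt hb2d hvp))
      exact not_li_of_C_mul c hc hbli
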